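/- Let m ≥ 2, n = m(m−1)/2, and let (a_1, …, a_n) be any enumeration of the transvections {s_{i,j} : 1 ≤ i < j ≤ m} that is a Mal'cev basis of UT_m(ℤ). Write x_{i,j}, y_{i,j}, q_{i,j} for the variables and multiplication polynomials indexed by the basis position of s_{i,j}, and let q_{i,j} ∈ ℚ[x_{i,j}, y_{i,j} : 1 ≤ i < j ≤ m] be multiplication polynomials for this basis. Then for all 1 ≤ k < ℓ ≤ m, every monomial ω occurring with non-zero coefficient in q_{k,ℓ} has the following form: there exist d ≥ 1 and integers k = λ_0 < λ_1 < ⋯ < λ_d = ℓ such that ω = ∏_{ν=1}^{d} X_{λ_{ν−1}, λ_ν}, where each X_{i,j} is one of the two variables x_{i,j}, y_{i,j}. -/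

import Mathlib

open scoped TensorProduct
open scoped commutatorElement

/-- diagonal entries of a product of two upper triangular matrices -/
private lemma diag_mul_triangular {m : ℕ} {A B : Matrix (Fin m) (Fin m) ℤ}
    (hA : ∀ i j : Fin m, j < i → A i j = 0) (hB : ∀ i j : Fin m, j < i → B i j = 0)
    (i : Fin m) : (A * B) i i = A i i * B i i := by
  rw [Matrix.mul_apply]
  apply Finset.sum_eq_single
  · intro k _ hk
    rcases lt_or_gt_of_ne hk with h | h
    · rw [hA i k h, zero_mul]
    · rw [hB k i h, mul_zero]
  · intro h; exact absurd (Finset.mem_univ i) h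

/-- The group of upper unitriangular `m × m` integer matrices, as a subgroup of the
units of the matrix ring. -/
def UT (m : ℕ) : Subgroup (Matrix (Fin m) (Fin m) ℤ)ˣ where
  carrier := {A | (∀ i j : Fin m, j < i → A.val i j = 0) ∧ ∀ i : Fin m, A.val i i = 1}
  one_mem' := by
    refine ⟨fun i j hji => ?_, fun i => ?_⟩
    · simp [Matrix.one_apply, (ne_of_lt hji).symm]
    · simp
  mul_mem' := by
    rintro A B ⟨hA1, hA2⟩ ⟨hB1, hB2⟩
    refine ⟨fun i j hji => ?_, fun i => ?_⟩
    · rw [Units.val_mul, Matrix.mul_apply]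
      apply Finset.sum_eq_zero
      intro k _
      rcases lt_or_ge k i with h | h
      · rw [hA1 i k h, zero_mul]
      · rw [hB1 k j (lt_of_lt_of_le hji h), mul_zero]
    · rw [Units.val_mul, diag_mul_triangular hA1 hB1, hA2, hB2, one_mul]
  inv_mem' := by
    rintro A ⟨hA1, hA2⟩
    have hinv : ∀ i j : Fin m, j < i → (A⁻¹).val i j = 0 := by
      haveI : Invertible A.val := A.isUnit.invertible
      have h1 : Matrix.BlockTriangular A.val (id : Fin m → Fin m) := fun i j h => hA1 i j h
      have h2 := Matrix.blockTriangular_inv_of_blockTriangular h1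
      intro i j hji
      rw [Matrix.coe_units_inv]
      exact h2 hji
    refine ⟨hinv, fun i => ?_⟩
    have h3 : ((A⁻¹).val * A.val) i i = (A⁻¹).val i i * A.val i i :=
      diag_mul_triangular hinv hA1 i
    rw [Units.inv_mul] at h3
    rw [hA2] at h3
    simpa [Matrix.one_apply] using h3.symm

/-- The transvection `s_{i,j} = 1 + E_{i,j}` as an element of `UT m`. -/
def sUT {m : ℕ} (i j : Fin m) (hij : i < j) : ↥(UT m) :=
  ⟨⟨Matrix.transvection i j (1 : ℤ), Matrix.transvection i j (-1 : ℤ),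
    by rw [Matrix.transvection_mul_transvection_same _ _ (ne_of_lt hij)]; simp,
    by rw [Matrix.transvection_mul_transvection_same _ _ (ne_of_lt hij)]; simp⟩,
   by
    constructor
    · intro a b hba
      show Matrix.transvection i j (1 : ℤ) a b = 0
      rw [Matrix.transvection, Matrix.add_apply, Matrix.one_apply,
        if_neg (ne_of_gt hba)]
      rw [Matrix.single_apply_of_ne]
      · ring
      · rintro ⟨rfl, rfl⟩
        exact absurd hij (not_lt_of_gt hba)
    · intro a
      show Matrix.transvection i j (1 : ℤ) a a = 1
      rw [Matrix.transvection, Matrix.add_apply, Matrix.one_apply, if_pos rfl]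
      rw [Matrix.single_apply_of_ne]
      · ring
      · rintro ⟨rfl, rfl⟩
        exact lt_irrefl _ hij⟩

/-- The set of index pairs `(i, j)` with `i < j`. -/
abbrev Pears (m : ℕ) := {p : Fin m × Fin m // p.1 < p.2}

/-- The ordered product `a 0 ^ x 0 * a 1 ^ x 1 * ⋯ * a (n-1) ^ x (n-1)`. -/
def malcevProd {G : Type*} [Group G] {n : ℕ} (a : Fin n → G) (x : Fin n → ℤ) : G :=
  ((List.finRange n).map fun i => a i ^ x i).prod

/-- `a` is a Mal'cev basis: normal forms are unique and the subgroups
`G_i = ⟨a_i, …, a_n⟩` form a central series. -/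
def IsMalcevBasis {G : Type*} [Group G] {n : ℕ} (a : Fin n → G) : Prop :=
  Function.Bijective (malcevProd a) ∧
    ∀ i : Fin n, ∀ g : G, ∀ h ∈ Subgroup.closure {y | ∃ j : Fin n, i ≤ j ∧ y = a j},
      ⁅g, h⁆ ∈ Subgroup.closure {y | ∃ j : Fin n, i < j ∧ y = a j}



section Chain
variable {m : ℕ} {σ : Type*}

/-- `EPath e k ℓ L`: the list `L` of "edge labels" forms a path from `k` to `ℓ`. -/
inductive EPath (e : σ → Fin m × Fin m) : Fin m → Fin m → List σ → Prop
  | single (s : σ) : EPath e (e s).1 (e s).2 [s]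
  | cons (s : σ) {ℓ : Fin m} {L : List σ} (h : EPath e (e s).2 ℓ L) :
      EPath e (e s).1 ℓ (s :: L)

variable {e : σ → Fin m × Fin m}

theorem EPath.append {k i ℓ : Fin m} {L1 L2 : List σ} (h1 : EPath e k i L1)
    (h2 : EPath e i ℓ L2) : EPath e k ℓ (L1 ++ L2) := by
  induction h1 with
  | single s => exact EPath.cons s h2
  | cons s h ih => exact EPath.cons s (ih h2)

theorem EPath.length_pos {k ℓ : Fin m} {L : List σ} (h : EPath e k ℓ L) : 0 < L.length := by
  cases h <;> simp

theorem EPath.lt (he : ∀ s, (e s).1 < (e s).2) {k ℓ : Fin m} {L : List σ}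
    (h : EPath e k ℓ L) : k < ℓ := by
  induction h with
  | single s => exact he s
  | cons s h ih => exact (he s).trans ih

theorem EPath.bounds (he : ∀ s, (e s).1 < (e s).2) {k ℓ : Fin m} {L : List σ}
    (h : EPath e k ℓ L) : ∀ s ∈ L, k ≤ (e s).1 ∧ (e s).2 ≤ ℓ := by
  induction h with
  | single s => intro t ht; simp at ht; subst ht; exact ⟨le_refl _, le_refl _⟩
  | cons s h ih =>
    intro t ht
    rcases List.mem_cons.1 ht with rfl | ht
    · exact ⟨le_refl _, le_of_lt (h.lt he)⟩
    · exact ⟨le_of_lt (lt_of_lt_of_le (he s) (ih t ht).1), (ih t ht).2⟩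

theorem EPath.get_first {k ℓ : Fin m} {L : List σ} (h : EPath e k ℓ L) :
    ∀ hp : 0 < L.length, (e (L.get ⟨0, hp⟩)).1 = k := by
  cases h <;> intro hp <;> rfl

theorem EPath.get_last {k ℓ : Fin m} {L : List σ} (h : EPath e k ℓ L) :
    ∀ hp : L.length - 1 < L.length, (e (L.get ⟨L.length - 1, hp⟩)).2 = ℓ := by
  induction h with
  | single s => intro hp; rfl
  | cons s h ih =>
    rename_i ℓ' L0
    intro hp
    have h0 := h.length_pos
    have hget : (s :: L0).get ⟨(s :: L0).length - 1, hp⟩ = L0.get ⟨L0.length - 1, by omega⟩ := by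
      have h1 : ((s :: L0).get ⟨(L0.length - 1) + 1, by simp; omega⟩)
          = L0.get ⟨L0.length - 1, by omega⟩ := rfl
      rw [← h1]
      congr 1
      apply Fin.ext
      simp
      omega
    rw [hget, ih]

theorem EPath.link {k ℓ : Fin m} {L : List σ} (h : EPath e k ℓ L) :
    ∀ (j : ℕ) (hj : j + 1 < L.length),
      (e (L.get ⟨j, by omega⟩)).2 = (e (L.get ⟨j + 1, hj⟩)).1 := by
  induction h with
  | single s => intro j hj; simp at hj
  | cons s h ih =>
    rename_i ℓ' L0
    intro j hj
    cases j with
    | zero =>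
      simp only [List.length_cons] at hj
      have h0 : 0 < L0.length := by omega
      have hf := h.get_first h0
      show (e s).2 = (e (L0.get ⟨0, h0⟩)).1
      exact hf.symm
    | succ j =>
      simp only [List.length_cons] at hj
      show (e (L0.get ⟨j, by omega⟩)).2 = (e (L0.get ⟨j + 1, by omega⟩)).1
      exact ih j (by omega)

/-- A monomial is a "chain monomial" from `k` to `ℓ` of length at least `c`. -/
def ChainMonGE (e : σ → Fin m × Fin m) (c : ℕ) (k ℓ : Fin m) (d : σ →₀ ℕ) : Prop :=
  ∃ L : List σ, EPath e k ℓ L ∧ c ≤ L.length ∧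
    d = (L.map fun s => Finsupp.single s 1).sum

/-- All monomials of `P` are chain monomials from `k` to `ℓ` of length `≥ c`. -/
def Good (e : σ → Fin m × Fin m) (c : ℕ) (k ℓ : Fin m) (P : MvPolynomial σ ℚ) : Prop :=
  ∀ d ∈ P.support, ChainMonGE e c k ℓ d

theorem Good.mono {c c' : ℕ} (hc : c' ≤ c) {k ℓ : Fin m}
    {P : MvPolynomial σ ℚ} (h : Good e c k ℓ P) : Good e c' k ℓ P := by
  intro d hd
  obtain ⟨L, h1, h2, h3⟩ := h d hd
  exact ⟨L, h1, le_trans hc h2, h3⟩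

theorem Good.zero {c : ℕ} {k ℓ : Fin m} : Good e c k ℓ 0 := by
  intro d hd; simp at hd

theorem Good.add {c : ℕ} {k ℓ : Fin m} {P Q : MvPolynomial σ ℚ}
    (hP : Good e c k ℓ P) (hQ : Good e c k ℓ Q) : Good e c k ℓ (P + Q) := by
  classical
  intro d hd
  rcases Finset.mem_union.1 (MvPolynomial.support_add hd) with h | h
  · exact hP d h
  · exact hQ d h

theorem Good.neg {c : ℕ} {k ℓ : Fin m} {P : MvPolynomial σ ℚ}
    (hP : Good e c k ℓ P) : Good e c k ℓ (-P) := by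
  intro d hd
  rw [MvPolynomial.support_neg] at hd
  exact hP d hd

theorem Good.sub {c : ℕ} {k ℓ : Fin m} {P Q : MvPolynomial σ ℚ}
    (hP : Good e c k ℓ P) (hQ : Good e c k ℓ Q) : Good e c k ℓ (P - Q) := by
  rw [sub_eq_add_neg]; exact hP.add hQ.neg

theorem Good.C_mul {c : ℕ} {k ℓ : Fin m} {r : ℚ} {P : MvPolynomial σ ℚ}
    (hP : Good e c k ℓ P) : Good e c k ℓ (MvPolynomial.C r * P) := by
  intro d hd
  rw [MvPolynomial.C_mul'] at hd
  exact hP d (MvPolynomial.support_smul hd)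

theorem Good.sum {c : ℕ} {k ℓ : Fin m} {ι : Type*} (s : Finset ι)
    (f : ι → MvPolynomial σ ℚ) (hf : ∀ i ∈ s, Good e c k ℓ (f i)) :
    Good e c k ℓ (∑ i ∈ s, f i) := by
  classical
  induction s using Finset.induction_on with
  | empty => simpa using Good.zero
  | insert _ _ hns ih =>
    rename_i a s
    rw [Finset.sum_insert hns]
    exact (hf a (Finset.mem_insert_self a s)).add
      (ih fun i hi => hf i (Finset.mem_insert_of_mem hi))

theorem Good.mul {c1 c2 : ℕ} {k i ℓ : Fin m} {P Q : MvPolynomial σ ℚ}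
    (hP : Good e c1 k i P) (hQ : Good e c2 i ℓ Q) :
    Good e (c1 + c2) k ℓ (P * Q) := by
  classical
  intro d hd
  have := MvPolynomial.support_mul P Q hd
  rw [Finset.mem_add] at this
  obtain ⟨d1, hd1, d2, hd2, rfl⟩ := this
  obtain ⟨L1, p1, l1, e1⟩ := hP d1 hd1
  obtain ⟨L2, p2, l2, e2⟩ := hQ d2 hd2
  refine ⟨L1 ++ L2, p1.append p2, ?_, ?_⟩
  · simp only [List.length_append]; omega
  · rw [e1, e2, List.map_append, List.sum_append]

theorem Good.X {k ℓ : Fin m} {s : σ} (hs : e s = (k, ℓ)) :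
    Good e 1 k ℓ (MvPolynomial.X s) := by
  classical
  intro d hd
  rw [MvPolynomial.support_X, Finset.mem_singleton] at hd
  subst hd
  have hp : EPath e k ℓ [s] := by
    have := EPath.single (e := e) s
    rwa [hs] at this
  exact ⟨[s], hp, by simp, by simp⟩

theorem Good.pathProd {τ : Type*} {f : τ → Fin m × Fin m} {k ℓ : Fin m} {L : List τ}
    (hL : EPath f k ℓ L) (G : τ → MvPolynomial σ ℚ)
    (hG : ∀ s ∈ L, Good e 1 (f s).1 (f s).2 (G s)) :
    Good e 1 k ℓ ((L.map G).prod) := by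
  induction hL with
  | single s => simpa using hG s (by simp)
  | cons s h ih =>
    rename_i ℓ' L0
    rw [List.map_cons, List.prod_cons]
    have h1 : Good e 1 (f s).1 (f s).2 (G s) := hG s (by simp)
    have h2 : Good e 1 (f s).2 ℓ' ((L0.map G).prod) :=
      ih fun t ht => hG t (List.mem_cons_of_mem _ ht)
    exact (h1.mul h2).mono (by omega)

/-- The matrix `1 + E_{e s} X_s`. -/
noncomputable def factorMat (e : σ → Fin m × Fin m) (s : σ) : Matrix (Fin m) (Fin m) (MvPolynomial σ ℚ) :=
  1 + Matrix.single (e s).1 (e s).2 (MvPolynomial.X s)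

/-- The product of the factor matrices over a list of edge labels. -/
noncomputable def matProd (e : σ → Fin m × Fin m) (L : List σ) : Matrix (Fin m) (Fin m) (MvPolynomial σ ℚ) :=
  (L.map (factorMat e)).prod

theorem matProd_nil (e : σ → Fin m × Fin m) : matProd e [] = 1 := rfl

theorem matProd_cons (e : σ → Fin m × Fin m) (s : σ) (L : List σ) :
    matProd e (s :: L) = factorMat e s * matProd e L := by
  rw [matProd, List.map_cons, List.prod_cons]; rfl

theorem factor_mul_apply (e : σ → Fin m × Fin m) (s : σ)
    (A : Matrix (Fin m) (Fin m) (MvPolynomial σ ℚ)) (k ℓ : Fin m) :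
    (factorMat e s * A) k ℓ =
      A k ℓ + (if k = (e s).1 then MvPolynomial.X s * A (e s).2 ℓ else 0) := by
  rw [factorMat, add_mul, one_mul, Matrix.add_apply]
  congr 1
  by_cases h : k = (e s).1
  · subst h; simp
  · simp [h]

theorem matProd_entries (e : σ → Fin m × Fin m) (he : ∀ s, (e s).1 < (e s).2) (L : List σ) :
    (∀ k, matProd e L k k = 1) ∧ (∀ k ℓ : Fin m, ℓ < k → matProd e L k ℓ = 0) ∧
      ∀ k ℓ : Fin m, k < ℓ → Good e 1 k ℓ (matProd e L k ℓ) := by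
  induction L with
  | nil =>
    refine ⟨fun k => ?_, fun k ℓ h => ?_, fun k ℓ h => ?_⟩ <;>
      rw [matProd_nil]
    · simp
    · exact Matrix.one_apply_ne (ne_of_gt h)
    · rw [Matrix.one_apply_ne (ne_of_lt h)]
      exact Good.zero
  | cons s L ih =>
    obtain ⟨ih1, ih2, ih3⟩ := ih
    refine ⟨fun k => ?_, fun k ℓ h => ?_, fun k ℓ h => ?_⟩ <;>
      rw [matProd_cons, factor_mul_apply]
    · by_cases hk : k = (e s).1
      · rw [if_pos hk, ih1, ih2 (e s).2 k (hk ▸ he s), mul_zero, add_zero]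
      · rw [if_neg hk, ih1, add_zero]
    · by_cases hk : k = (e s).1
      · rw [if_pos hk, ih2 _ _ h, ih2 (e s).2 ℓ (lt_trans h (hk ▸ he s)), mul_zero, add_zero]
      · rw [if_neg hk, ih2 _ _ h, add_zero]
    · by_cases hk : k = (e s).1
      · rw [if_pos hk]
        refine (ih3 k ℓ h).add ?_
        rcases lt_trichotomy (e s).2 ℓ with hj | hj | hj
        · have hgood : Good e 1 k (e s).2 (MvPolynomial.X s) :=
            Good.X (by subst hk; rfl)
          exact ((hgood.mul (ih3 _ _ hj)).mono (by omega))
        · rw [hj, ih1, mul_one]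
          exact Good.X (by subst hk; rw [← hj])
        · rw [ih2 _ _ hj, mul_zero]
          exact Good.zero
      · rw [if_neg hk, add_zero]
        exact ih3 k ℓ h

theorem matProd_upper (e : σ → Fin m × Fin m) (he : ∀ s, (e s).1 < (e s).2)
    (L : List σ) (k ℓ : Fin m) (h : k < ℓ) :
    ∃ D, Good e 2 k ℓ D ∧
      matProd e L k ℓ =
        ((L.filter fun s => e s = (k, ℓ)).map MvPolynomial.X).sum + D := by
  classical
  induction L with
  | nil =>
    refine ⟨0, Good.zero, ?_⟩
    rw [matProd_nil, Matrix.one_apply_ne (ne_of_lt h)]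
    simp
  | cons s L ih =>
    obtain ⟨D, hD, hE⟩ := ih
    rw [matProd_cons, factor_mul_apply, hE]
    by_cases hk : k = (e s).1
    · rcases lt_trichotomy (e s).2 ℓ with hj | hj | hj
      · -- adds a chain of length ≥ 2
        have hne : ¬ (e s = (k, ℓ)) := by
          intro hc; rw [hc] at hj; exact lt_irrefl _ hj
        refine ⟨D + MvPolynomial.X s * matProd e L (e s).2 ℓ, ?_, ?_⟩
        · refine hD.add ?_
          have hgood : Good e 1 k (e s).2 (MvPolynomial.X s) :=
            Good.X (by subst hk; rfl)
          exact hgood.mul ((matProd_entries e he L).2.2 _ _ hj)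
        · rw [if_pos hk, List.filter_cons_of_neg (by simpa using hne)]
          ring
      · -- e s = (k, ℓ): contributes the variable X s
        have heq : e s = (k, ℓ) := by subst hk; rw [← hj]
        refine ⟨D, hD, ?_⟩
        rw [if_pos hk, hj, (matProd_entries e he L).1, mul_one,
          List.filter_cons_of_pos (by simpa using heq), List.map_cons, List.sum_cons]
        ring
      · have hne : ¬ (e s = (k, ℓ)) := by
          intro hc; rw [hc] at hj; exact lt_irrefl _ hj
        refine ⟨D, hD, ?_⟩
        rw [if_pos hk, (matProd_entries e he L).2.1 _ _ hj, mul_zero, add_zero,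
          List.filter_cons_of_neg (by simpa using hne)]
    · have hne : ¬ (e s = (k, ℓ)) := by
        intro hc; rw [hc] at hk; exact hk rfl
      refine ⟨D, hD, ?_⟩
      rw [if_neg hk, add_zero, List.filter_cons_of_neg (by simpa using hne)]
end Chain


theorem eval_int_zero {σ : Type*} (P : MvPolynomial σ ℚ)
    (h : ∀ φ : σ → ℤ, MvPolynomial.eval (fun s => (φ s : ℚ)) P = 0) : P = 0 := by
  classical
  set N : ℤ := ∏ d ∈ P.support, ((P.coeff d).den : ℤ) with hNdef
  have hN0 : N ≠ 0 := by
    rw [hNdef]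
    exact Finset.prod_ne_zero_iff.2 fun d _ => by
      exact_mod_cast (P.coeff d).den_nz
  have hNd : ∀ d ∈ P.support, ((P.coeff d).den : ℤ) ∣ N := fun d hd =>
    Finset.dvd_prod_of_mem _ hd
  set P' : MvPolynomial σ ℤ :=
    ∑ d ∈ P.support, MvPolynomial.monomial d
      ((P.coeff d).num * (N / ((P.coeff d).den : ℤ))) with hP'def
  have hmap : MvPolynomial.map (Int.castRingHom ℚ) P' = MvPolynomial.C (N : ℚ) * P := by
    apply MvPolynomial.ext
    intro d
    rw [MvPolynomial.coeff_map, MvPolynomial.coeff_C_mul, hP'def, MvPolynomial.coeff_sum]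
    simp only [MvPolynomial.coeff_monomial]
    rw [Finset.sum_ite_eq' P.support d]
    by_cases hd : d ∈ P.support
    · rw [if_pos hd]
      obtain ⟨t, ht⟩ := hNd d hd
      have hden : ((P.coeff d).den : ℤ) ≠ 0 := by exact_mod_cast (P.coeff d).den_nz
      rw [ht, Int.mul_ediv_cancel_left _ hden]
      have hq : ((P.coeff d).den : ℚ) * (P.coeff d) = ((P.coeff d).num : ℚ) := by
        rw [mul_comm]
        exact_mod_cast Rat.mul_den_eq_num _
      push_cast
      rw [mul_assoc, mul_comm ((t : ℚ)) (P.coeff d), ← mul_assoc, hq]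
      simp
    · rw [if_neg hd]
      rw [MvPolynomial.notMem_support_iff] at hd
      rw [hd, mul_zero]
      simp
  have hP'0 : P' = 0 := by
    apply MvPolynomial.funext (q := 0)
    intro φ
    rw [map_zero]
    have : ((MvPolynomial.eval φ P' : ℤ) : ℚ) = 0 := by
      have h2 := MvPolynomial.eval₂_comp_left (Int.castRingHom ℚ) (RingHom.id ℤ) φ P'
      simp only [RingHom.comp_id] at h2
      have h1 : ((MvPolynomial.eval φ P' : ℤ) : ℚ) =
          MvPolynomial.eval (fun s => ((φ s : ℤ) : ℚ)) (MvPolynomial.map (Int.castRingHom ℚ) P') := by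
        rw [MvPolynomial.eval_map]
        exact h2
      rw [h1, hmap]
      rw [map_mul]
      rw [h fun s => φ s, mul_zero]
    exact_mod_cast this
  have : MvPolynomial.C (N : ℚ) * P = 0 := by rw [← hmap, hP'0, map_zero]
  rcases mul_eq_zero.1 this with hc | hc
  · exfalso
    rw [MvPolynomial.C_eq_zero] at hc
    exact hN0 (by exact_mod_cast hc)
  · exact hc

theorem sUT_zpow {m : ℕ} (i j : Fin m) (hij : i < j) (c : ℤ) :
    (((sUT i j hij ^ c : ↥(UT m)) : (Matrix (Fin m) (Fin m) ℤ)ˣ) :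
      Matrix (Fin m) (Fin m) ℤ) = Matrix.transvection i j c := by
  have hij' : i ≠ j := ne_of_lt hij
  have hmul : ∀ u v : ↥(UT m),
      (((u * v : ↥(UT m)) : (Matrix (Fin m) (Fin m) ℤ)ˣ) : Matrix (Fin m) (Fin m) ℤ) =
        ((u : (Matrix (Fin m) (Fin m) ℤ)ˣ) : Matrix (Fin m) (Fin m) ℤ) *
          ((v : (Matrix (Fin m) (Fin m) ℤ)ˣ) : Matrix (Fin m) (Fin m) ℤ) := fun u v => rfl
  have hlast : (((sUT i j hij : ↥(UT m)) : (Matrix (Fin m) (Fin m) ℤ)ˣ) :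
      Matrix (Fin m) (Fin m) ℤ) = Matrix.transvection i j 1 := rfl
  have hinv : (((sUT i j hij ^ (-1 : ℤ) : ↥(UT m)) : (Matrix (Fin m) (Fin m) ℤ)ˣ) :
      Matrix (Fin m) (Fin m) ℤ) = Matrix.transvection i j (-1) := by
    rw [zpow_neg_one]
    rfl
  induction c using Int.induction_on with
  | zero => simp
  | succ k ih =>
    rw [zpow_add_one, hmul, ih, hlast, Matrix.transvection_mul_transvection_same _ _ hij']
  | pred k ih =>
    rw [show (-(k : ℤ) - 1) = (-(k : ℤ)) + (-1) by ring, zpow_add, hmul, ih, hinv,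
      Matrix.transvection_mul_transvection_same _ _ hij']


theorem matProd_eval {m : ℕ} {σ : Type*} (e : σ → Fin m × Fin m) (b : σ → ↥(UT m))
    (hval : ∀ (s : σ) (c : ℤ),
      (((b s ^ c : ↥(UT m)) : (Matrix (Fin m) (Fin m) ℤ)ˣ) : Matrix (Fin m) (Fin m) ℤ) =
        Matrix.transvection (e s).1 (e s).2 c)
    (φ : σ → ℤ) (L : List σ) :
    (matProd e L).map (MvPolynomial.eval fun s => ((φ s : ℤ) : ℚ)) =
      (((((L.map fun s => b s ^ φ s).prod : ↥(UT m)) : (Matrix (Fin m) (Fin m) ℤ)ˣ) :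
        Matrix (Fin m) (Fin m) ℤ)).map (Int.castRingHom ℚ) := by
  induction L with
  | nil =>
    rw [matProd_nil, List.map_nil, List.prod_nil]
    have h1 : ((((1 : ↥(UT m)) : (Matrix (Fin m) (Fin m) ℤ)ˣ) :
        Matrix (Fin m) (Fin m) ℤ)) = (1 : Matrix (Fin m) (Fin m) ℤ) := rfl
    rw [h1]
    rw [Matrix.map_one _ (map_zero _) (map_one _), Matrix.map_one _ (by simp) (by simp)]
  | cons s L ih =>
    rw [matProd_cons, List.map_cons, List.prod_cons]
    have hmul : ∀ u v : ↥(UT m),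
        (((u * v : ↥(UT m)) : (Matrix (Fin m) (Fin m) ℤ)ˣ) : Matrix (Fin m) (Fin m) ℤ) =
          ((u : (Matrix (Fin m) (Fin m) ℤ)ˣ) : Matrix (Fin m) (Fin m) ℤ) *
            ((v : (Matrix (Fin m) (Fin m) ℤ)ˣ) : Matrix (Fin m) (Fin m) ℤ) := fun u v => rfl
    rw [hmul]
    rw [Matrix.map_mul, Matrix.map_mul, ih, hval s (φ s)]
    congr 1
    -- factor matrix evaluates to cast of transvection
    rw [factorMat, Matrix.transvection]
    ext k ℓ
    simp only [Matrix.map_apply, Matrix.add_apply, map_add]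
    have h1 : (MvPolynomial.eval fun s => ((φ s : ℤ) : ℚ))
        ((1 : Matrix (Fin m) (Fin m) (MvPolynomial σ ℚ)) k ℓ) =
        (((1 : Matrix (Fin m) (Fin m) ℤ) k ℓ : ℤ) : ℚ) := by
      by_cases hk : k = ℓ
      · subst hk; simp [Matrix.one_apply]
      · simp [Matrix.one_apply, hk]
    have h2 : (MvPolynomial.eval fun s => ((φ s : ℤ) : ℚ))
        (Matrix.single (e s).1 (e s).2 (MvPolynomial.X s) k ℓ) =
        ((Matrix.single (e s).1 (e s).2 (φ s) k ℓ : ℤ) : ℚ) := by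
      by_cases hk : (e s).1 = k ∧ (e s).2 = ℓ
      · obtain ⟨ha1, ha2⟩ := hk; subst ha1; subst ha2; simp
      · rw [Matrix.single_apply_of_ne (h := hk),
          Matrix.single_apply_of_ne (h := hk)]
        simp
    rw [h1, h2]
    simp


theorem monomial_eq_prodX {σ : Type*} (L : List σ) (c : ℚ) :
    (MvPolynomial.monomial ((L.map fun s => Finsupp.single s 1).sum) c :
        MvPolynomial σ ℚ) =
      MvPolynomial.C c * (L.map MvPolynomial.X).prod := by
  induction L with
  | nil => simp [MvPolynomial.monomial_zero']
  | cons s L ih =>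
    rw [List.map_cons, List.sum_cons, List.map_cons, List.prod_cons,
      add_comm (Finsupp.single s 1), MvPolynomial.monomial_add_single, ih]
    ring

theorem list_sum_get {α : Type*} {M : Type*} [AddCommMonoid M] (L : List α) (f : α → M) :
    (L.map f).sum = ∑ i : Fin L.length, f (L.get i) := by
  induction L with
  | nil => simp
  | cons s L ih =>
    rw [List.map_cons, List.sum_cons, ih]
    show _ = ∑ i : Fin (L.length + 1), f ((s :: L).get i)
    rw [Fin.sum_univ_succ]
    rfl

theorem EPath.gap_lt {m : ℕ} {σ : Type*} {e : σ → Fin m × Fin m}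
    (he : ∀ s, (e s).1 < (e s).2) {k ℓ : Fin m} {L : List σ}
    (h : EPath e k ℓ L) (h2 : 2 ≤ L.length) :
    ∀ s ∈ L, (e s).2.val - (e s).1.val < ℓ.val - k.val := by
  cases h with
  | single s => simp at h2
  | cons s0 h0 =>
    rename_i L0
    intro t ht
    have hmid : (e s0).2 < ℓ := h0.lt he
    have hs0 : (e s0).1 < (e s0).2 := he s0
    rcases List.mem_cons.1 ht with rfl | ht
    · have := hmid
      rw [Fin.lt_def] at this hs0
      omega
    · obtain ⟨hb1, hb2⟩ := h0.bounds he t ht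
      have hst := he t
      rw [Fin.lt_def] at hmid hs0 hst
      rw [Fin.le_def] at hb1 hb2
      omega


theorem pos_of_eF {m n : ℕ} {pos : Pears m → Fin n} (hposb : Function.Bijective pos)
    {eF : Fin n → Fin m × Fin m} (heF : ∀ p : Pears m, eF (pos p) = (p.1.1, p.1.2)) :
    ∀ (i : Fin n) (p : Pears m), eF i = (p.1.1, p.1.2) → pos p = i := by
  intro i p hp
  obtain ⟨p', rfl⟩ := hposb.2 i
  have h0 := (heF p').symm.trans hp
  have hpp : p = p' := by
    apply Subtype.ext
    calc p.1 = (p.1.1, p.1.2) := rfl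
      _ = (p'.1.1, p'.1.2) := h0.symm
      _ = p'.1 := rfl
  rw [hpp]


theorem key_lemma {m n : ℕ} (a : Fin n → ↥(UT m)) (pos : Pears m → Fin n)
    (hposb : Function.Bijective pos)
    (ha : ∀ p : Pears m, a (pos p) = sUT p.1.1 p.1.2 p.2)
    (eF : Fin n → Fin m × Fin m)
    (heF : ∀ p : Pears m, eF (pos p) = (p.1.1, p.1.2)) :
    ∀ (g : ℕ) (p : Pears m), p.1.2.val - p.1.1.val ≤ g →
      ∃ G : MvPolynomial (Fin n ⊕ Fin n) ℚ,
        Good (Sum.elim eF eF) 1 p.1.1 p.1.2 G ∧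
        ∀ x y z : Fin n → ℤ, malcevProd a x * malcevProd a y = malcevProd a z →
          ((z (pos p) : ℤ) : ℚ) =
            MvPolynomial.eval
              (Sum.elim (fun j => ((x j : ℤ) : ℚ)) fun j => ((y j : ℤ) : ℚ)) G := by
  classical
  have he : ∀ i, (eF i).1 < (eF i).2 := by
    intro i
    obtain ⟨p, rfl⟩ := hposb.2 i
    rw [heF p]; exact p.2
  set eS : Fin n ⊕ Fin n → Fin m × Fin m := Sum.elim eF eF with heSdef
  have heS : ∀ s, (eS s).1 < (eS s).2 := by rintro (s | s) <;> exact he s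
  have hposval : ∀ (i : Fin n) (p : Pears m), eF i = (p.1.1, p.1.2) → pos p = i := by
    intro i p hp
    obtain ⟨p', rfl⟩ := hposb.2 i
    have h0 := (heF p').symm.trans hp
    have hpp : p = p' := by
      apply Subtype.ext
      calc p.1 = (p.1.1, p.1.2) := rfl
        _ = (p'.1.1, p'.1.2) := h0.symm
        _ = p'.1 := rfl
    rw [hpp]
  have hval : ∀ (i : Fin n) (c : ℤ),
      (((a i ^ c : ↥(UT m)) : (Matrix (Fin m) (Fin m) ℤ)ˣ) : Matrix (Fin m) (Fin m) ℤ) =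
        Matrix.transvection (eF i).1 (eF i).2 c := by
    intro i c
    obtain ⟨p, rfl⟩ := hposb.2 i
    rw [ha p, heF p]
    exact sUT_zpow _ _ p.2 c
  have hvalS : ∀ (s : Fin n ⊕ Fin n) (c : ℤ),
      ((((Sum.elim a a) s ^ c : ↥(UT m)) : (Matrix (Fin m) (Fin m) ℤ)ˣ) :
        Matrix (Fin m) (Fin m) ℤ) =
        Matrix.transvection (eS s).1 (eS s).2 c := by
    rintro (s | s) c <;> exact hval s c
  intro g
  induction g with
  | zero =>
    intro p hp
    exfalso
    have h2 := p.2
    rw [Fin.lt_def] at h2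
    omega
  | succ g ih =>
    intro p hp
    -- decomposition of the x-matrix entry
    obtain ⟨D, hD, hE⟩ := matProd_upper eF he (List.finRange n) p.1.1 p.1.2 p.2
    have hfilter : ((List.finRange n).filter fun i => eF i = (p.1.1, p.1.2)) = [pos p] := by
      have h1 : ∀ i : Fin n, (eF i = (p.1.1, p.1.2)) ↔ i = pos p := by
        intro i
        constructor
        · intro hi; exact (hposval i p hi).symm
        · rintro rfl; exact heF p
      have h2 : ((List.finRange n).filter fun i => eF i = (p.1.1, p.1.2)) =
          (List.finRange n).filter fun i => i = pos p := by
        apply List.filter_congr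
        intro i _
        simp [h1 i]
      rw [h2, List.filter_eq,
        List.count_eq_one_of_mem (List.nodup_finRange n) (List.mem_finRange _)]
      rfl
    have hEkl : matProd eF (List.finRange n) p.1.1 p.1.2 = MvPolynomial.X (pos p) + D := by
      rw [hE, hfilter]; simp
    -- choice of sub-polynomials from the induction hypothesis
    have hsub : ∀ s : Fin n, ∃ G, (eF s).2.val - (eF s).1.val ≤ g →
        (Good eS 1 (eF s).1 (eF s).2 G ∧
          ∀ x y z : Fin n → ℤ, malcevProd a x * malcevProd a y = malcevProd a z →
            ((z s : ℤ) : ℚ) =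
              MvPolynomial.eval
                (Sum.elim (fun j => ((x j : ℤ) : ℚ)) fun j => ((y j : ℤ) : ℚ)) G) := by
      intro s
      by_cases hs : (eF s).2.val - (eF s).1.val ≤ g
      · obtain ⟨G, hG1, hG2⟩ := ih ⟨((eF s).1, (eF s).2), he s⟩ hs
        refine ⟨G, fun _ => ⟨hG1, ?_⟩⟩
        intro x y z hz
        have hpos : pos ⟨((eF s).1, (eF s).2), he s⟩ = s := hposval s _ rfl
        rw [← hpos]
        exact hG2 x y z hz
      · exact ⟨0, fun hc => absurd hc hs⟩
    choose Gsub hGsub using hsub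
    have hgapOf : ∀ d : {d // d ∈ D.support}, ∀ s ∈ (hD d.1 d.2).choose,
        (eF s).2.val - (eF s).1.val ≤ g := by
      intro d s hs
      obtain ⟨hpath, hlen, hsum⟩ := (hD d.1 d.2).choose_spec
      have h3 := EPath.gap_lt he hpath hlen s hs
      omega
    set LSig : List (Fin n ⊕ Fin n) :=
      (List.finRange n).map Sum.inl ++ (List.finRange n).map Sum.inr with hLSigdef
    set S : MvPolynomial (Fin n ⊕ Fin n) ℚ := ∑ d ∈ D.support.attach,
      MvPolynomial.C (MvPolynomial.coeff d.1 D) *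
        (((hD d.1 d.2).choose.map Gsub).prod) with hSdef
    refine ⟨matProd eS LSig p.1.1 p.1.2 - S, ?_, ?_⟩
    · apply Good.sub
      · exact (matProd_entries eS heS LSig).2.2 _ _ p.2
      · apply Good.sum
        intro d _
        apply Good.C_mul
        obtain ⟨hpath, hlen, hsum⟩ := (hD d.1 d.2).choose_spec
        exact Good.pathProd hpath Gsub fun s hs => (hGsub s (hgapOf d s hs)).1
    · intro x y z hmulz
      set vS : (Fin n ⊕ Fin n) → ℚ :=
        Sum.elim (fun j => ((x j : ℤ) : ℚ)) fun j => ((y j : ℤ) : ℚ) with hvS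
      have hx := matProd_eval eS (Sum.elim a a) hvalS (Sum.elim x y) LSig
      have hprod : ((LSig.map fun s => (Sum.elim a a) s ^ (Sum.elim x y) s).prod : ↥(UT m)) =
          malcevProd a x * malcevProd a y := by
        rw [hLSigdef, List.map_append, List.prod_append, List.map_map, List.map_map]
        rfl
      rw [hprod, hmulz] at hx
      have hz := matProd_eval eF a hval z (List.finRange n)
      have hzz : ((List.map (fun i => a i ^ z i) (List.finRange n)).prod : ↥(UT m)) =
          malcevProd a z := rfl
      rw [hzz] at hz
      have hentry : MvPolynomial.eval (fun s => ((Sum.elim x y s : ℤ) : ℚ))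
            (matProd eS LSig p.1.1 p.1.2) =
          MvPolynomial.eval (fun i => ((z i : ℤ) : ℚ))
            (matProd eF (List.finRange n) p.1.1 p.1.2) := by
        have e1 := congrArg (fun M => M p.1.1 p.1.2) hx
        have e2 := congrArg (fun M => M p.1.1 p.1.2) hz
        simp only [Matrix.map_apply] at e1 e2
        rw [e1, e2]
      have hfun : (fun s => ((Sum.elim x y s : ℤ) : ℚ)) = vS := by
        funext s; cases s <;> rfl
      rw [hfun, hEkl, map_add, MvPolynomial.eval_X] at hentry
      have hDeval : MvPolynomial.eval (fun i => ((z i : ℤ) : ℚ)) D =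
          MvPolynomial.eval vS S := by
        conv_lhs => rw [← MvPolynomial.support_sum_monomial_coeff D]
        rw [← Finset.sum_attach D.support
          (fun d => (MvPolynomial.monomial d) (MvPolynomial.coeff d D))]
        rw [map_sum, hSdef, map_sum]
        apply Finset.sum_congr rfl
        intro d _
        obtain ⟨hpath, hlen, hsum⟩ := (hD d.1 d.2).choose_spec
        have hmon : (MvPolynomial.monomial d.1) (MvPolynomial.coeff d.1 D) =
            MvPolynomial.C (MvPolynomial.coeff d.1 D) *
              (((hD d.1 d.2).choose.map MvPolynomial.X).prod) := by
          conv_lhs => rw [hsum]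
          rw [monomial_eq_prodX, ← hsum]
        rw [hmon, map_mul, map_mul, MvPolynomial.eval_C, MvPolynomial.eval_C]
        congr 1
        rw [map_list_prod (MvPolynomial.eval fun i => ((z i : ℤ) : ℚ)),
          map_list_prod (MvPolynomial.eval vS), List.map_map, List.map_map]
        congr 1
        apply List.map_congr_left
        intro s hs
        have h5 : ((z s : ℤ) : ℚ) = MvPolynomial.eval vS (Gsub s) :=
          (hGsub s (hgapOf d s hs)).2 x y z hmulz
        show MvPolynomial.eval (fun i => ((z i : ℤ) : ℚ)) (MvPolynomial.X s) =
          MvPolynomial.eval vS (Gsub s)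
        rw [MvPolynomial.eval_X, ← h5]
      rw [map_sub, ← hDeval, hentry]
      ring


theorem monomial_shape_UT (m : ℕ) (hm : 2 ≤ m)
    (n : ℕ) (hn : n = m * (m - 1) / 2)
    (a : Fin n → ↥(UT m)) (pos : Pears m → Fin n)
    (hposb : Function.Bijective pos)
    (ha : ∀ p : Pears m, a (pos p) = sUT p.1.1 p.1.2 p.2)
    (hmal : IsMalcevBasis a)
    (q : Fin n → MvPolynomial (Fin n ⊕ Fin n) ℚ)
    (hq : ∀ x y : Fin n → ℤ, ∃ z : Fin n → ℤ,
      malcevProd a x * malcevProd a y = malcevProd a z ∧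
      ∀ i : Fin n, (z i : ℚ) =
        MvPolynomial.eval (Sum.elim (fun j => (x j : ℚ)) fun j => (y j : ℚ)) (q i)) :
    ∀ p : Pears m, ∀ d ∈ (q (pos p)).support,
      ∃ (dd : ℕ) (_ : 1 ≤ dd) (lam : Fin (dd + 1) → Fin m) (hmono : StrictMono lam),
        lam 0 = p.1.1 ∧ lam (Fin.last dd) = p.1.2 ∧
        ∃ X : Fin dd → Fin n ⊕ Fin n,
          (∀ i : Fin dd,
            X i = Sum.inl (pos ⟨(lam i.castSucc, lam i.succ),
                    hmono (Fin.castSucc_lt_succ (i := i))⟩) ∨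
            X i = Sum.inr (pos ⟨(lam i.castSucc, lam i.succ),
                    hmono (Fin.castSucc_lt_succ (i := i))⟩)) ∧
          d = ∑ i : Fin dd, Finsupp.single (X i) 1 := by
  classical
  intro p d hd
  set pe : Pears m ≃ Fin n := Equiv.ofBijective pos hposb with hpe
  set eF : Fin n → Fin m × Fin m := fun i => ((pe.symm i).1.1, (pe.symm i).1.2) with heFdef
  have heF : ∀ p' : Pears m, eF (pos p') = (p'.1.1, p'.1.2) := by
    intro p'
    have h1 : pe.symm (pos p') = p' := by
      have h2 : pos p' = pe p' := rfl
      rw [h2, Equiv.symm_apply_apply]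
    rw [heFdef]
    simp only [h1]
  have heFlt : ∀ i, (eF i).1 < (eF i).2 := by
    intro i
    obtain ⟨p', rfl⟩ := hposb.2 i
    rw [heF p']; exact p'.2
  have heS : ∀ s : Fin n ⊕ Fin n, (Sum.elim eF eF s).1 < (Sum.elim eF eF s).2 := by
    rintro (s | s) <;> exact heFlt s
  obtain ⟨G, hGood, hGeval⟩ :=
    key_lemma a pos hposb ha eF heF (p.1.2.val - p.1.1.val) p le_rfl
  have hqG : q (pos p) = G := by
    have h0 : ∀ φ : (Fin n ⊕ Fin n) → ℤ,
        MvPolynomial.eval (fun s => ((φ s : ℤ) : ℚ)) (q (pos p) - G) = 0 := by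
      intro φ
      obtain ⟨z, hz1, hz2⟩ := hq (fun j => φ (Sum.inl j)) (fun j => φ (Sum.inr j))
      have hfun : (fun s => ((φ s : ℤ) : ℚ)) =
          Sum.elim (fun j => ((φ (Sum.inl j) : ℤ) : ℚ))
            (fun j => ((φ (Sum.inr j) : ℤ) : ℚ)) := by
        funext s; cases s <;> rfl
      rw [map_sub, hfun, ← hz2 (pos p), ← hGeval _ _ z hz1, sub_self]
    exact sub_eq_zero.1 (eval_int_zero _ h0)
  rw [hqG] at hd
  obtain ⟨L, hpath, hlen, hsum⟩ := hGood d hd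
  have hddpos : 0 < L.length := hpath.length_pos
  -- the vertex function
  set lam : Fin (L.length + 1) → Fin m := fun j =>
    if hj : (j : ℕ) < L.length then (Sum.elim eF eF (L.get ⟨j, hj⟩)).1 else p.1.2
    with hlamdef
  have hedge1 : ∀ i : Fin L.length, lam i.castSucc = (Sum.elim eF eF (L.get i)).1 := by
    intro i
    rw [hlamdef]
    simp only []
    rw [dif_pos (show ((i.castSucc : Fin (L.length + 1)) : ℕ) < L.length from i.isLt)]
    have hidx : (⟨((i.castSucc : Fin (L.length + 1)) : ℕ), i.isLt⟩ : Fin L.length) = i :=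
      Fin.ext (by simp)
    rw [hidx]
  have hedge2 : ∀ i : Fin L.length, lam i.succ = (Sum.elim eF eF (L.get i)).2 := by
    intro i
    rw [hlamdef]
    simp only []
    by_cases hc : (i : ℕ) + 1 < L.length
    · have hc' : ((i.succ : Fin (L.length + 1)) : ℕ) < L.length := by simpa using hc
      rw [dif_pos hc']
      have hidx : (⟨((i.succ : Fin (L.length + 1)) : ℕ), hc'⟩ : Fin L.length) =
          (⟨(i : ℕ) + 1, hc⟩ : Fin L.length) := Fin.ext (by simp)
      rw [hidx, ← hpath.link (i : ℕ) hc]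
    · rw [dif_neg (show ¬ ((i.succ : Fin (L.length + 1)) : ℕ) < L.length by
        simpa using hc)]
      have hil : (i : ℕ) = L.length - 1 := by omega
      have hidx : i = (⟨L.length - 1, by omega⟩ : Fin L.length) := Fin.ext (by simpa using hil)
      rw [hidx]
      exact (hpath.get_last (by omega)).symm
  have hmono : StrictMono lam := by
    rw [Fin.strictMono_iff_lt_succ]
    intro i
    rw [hedge1 i, hedge2 i]
    exact heS _
  have hlam0 : lam 0 = p.1.1 := by
    have h1 : (0 : Fin (L.length + 1)) = (⟨0, by omega⟩ : Fin L.length).castSucc := rfl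
    rw [h1, hedge1]
    have := hpath.get_first hddpos
    exact this
  have hlamlast : lam (Fin.last L.length) = p.1.2 := by
    rw [hlamdef]
    simp only []
    rw [dif_neg (by simp)]
  refine ⟨L.length, hlen, lam, hmono, hlam0, hlamlast, fun i => L.get i, ?_, ?_⟩
  · intro i
    have hXedge : Sum.elim eF eF (L.get i) = (lam i.castSucc, lam i.succ) := by
      apply Prod.ext
      · exact (hedge1 i).symm
      · exact (hedge2 i).symm
    rcases hX : L.get i with s | s
    · left
      show L.get i = _
      rw [hX]
      congr 1
      symm
      apply pos_of_eF hposb heF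
      rw [show eF s = Sum.elim eF eF (L.get i) by rw [hX]; rfl, hXedge]
    · right
      show L.get i = _
      rw [hX]
      congr 1
      symm
      apply pos_of_eF hposb heF
      rw [show eF s = Sum.elim eF eF (L.get i) by rw [hX]; rfl, hXedge]
  · rw [hsum, list_sum_get]
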